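/- Fix d ∈ ℕ and suppose for each N > d the discrete orthonormal polynomials {φ_k^{(N)}}_{k=0}^d on the points x_1^{(N)},…,x_N^{(N)} ⊂ [a,b] satisfy ‖φ_k^{(N)}‖_∞² ≤ C(d)/N for all k = 0,…,d and all N ≥ N(d), for some constants C(d) > 0 and N(d) > d. Then the least-squares quadrature weights ω_n^{LS,(N)} = ∑_{k=0}^d φ_k^{(N)}(x_n^{(N)}) I[φ_k^{(N)}] satisfy sup_{N>d} ∑_{n=1}^N |ω_n^{LS,(N)}| < ∞; in particular ∑_{n=1}^N |ω_n^{LS,(N)}| ≤ K_ω (d+1) C(d) for N ≥ N(d). -/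

import Mathlib

open MeasureTheory

theorem stmt13 (a b : ℝ) (hab : a < b) (ω : ℝ → ℝ)
    (hω : IntervalIntegrable ω volume a b) (d : ℕ)
    (x : (N : ℕ) → Fin N → ℝ) (hx : ∀ N n, x N n ∈ Set.Icc a b)
    (hinj : ∀ N, d < N → Function.Injective (x N))
    (φ : (N : ℕ) → Fin (d + 1) → Polynomial ℝ)
    (hdeg : ∀ N k, ((φ N k).degree : WithBot ℕ) ≤ (d : WithBot ℕ))
    (horth : ∀ N, d < N → ∀ k l,
      ∑ n, (φ N k).eval (x N n) * (φ N l).eval (x N n) = if k = l then 1 else 0)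
    (C : ℝ) (hC : 0 < C) (N₀ : ℕ) (hN₀ : d < N₀)
    (hbound : ∀ N, N₀ ≤ N → ∀ k, ∀ t ∈ Set.Icc a b, |(φ N k).eval t| ^ 2 ≤ C / N)
    (w : (N : ℕ) → Fin N → ℝ)
    (hw : ∀ N n, w N n =
      ∑ k, (φ N k).eval (x N n) * ∫ t in a..b, (φ N k).eval t * ω t) :
    (∀ N, N₀ ≤ N → ∑ n, |w N n| ≤ (∫ t in a..b, |ω t|) * (d + 1) * C) ∧
      ∃ M : ℝ, ∀ N, d < N → ∑ n, |w N n| ≤ M := by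
  have hab' : a ≤ b := hab.le
  set Kω := ∫ t in a..b, |ω t| with hKω
  have hKnn : 0 ≤ Kω := intervalIntegral.integral_nonneg hab' (fun t _ => abs_nonneg _)
  have hωabs : IntervalIntegrable (fun t => |ω t|) volume a b := hω.abs
  have main : ∀ N, N₀ ≤ N → ∑ n, |w N n| ≤ Kω * (d + 1) * C := by
    intro N hN
    have hNd : d < N := lt_of_lt_of_le hN₀ hN
    have hNpos : (0:ℝ) < N := by exact_mod_cast Nat.lt_of_le_of_lt (Nat.zero_le d) hNd
    set s := Real.sqrt (C / N) with hs
    have hsnn : 0 ≤ s := Real.sqrt_nonneg _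
    have hs2 : s ^ 2 = C / N := Real.sq_sqrt (by positivity)
    have hφbd : ∀ k, ∀ t ∈ Set.Icc a b, |(φ N k).eval t| ≤ s := by
      intro k t ht
      rw [hs]
      exact (Real.le_sqrt (abs_nonneg _) (by positivity)).mpr (hbound N hN k t ht)
    have hint : ∀ k, IntervalIntegrable (fun t => (φ N k).eval t * ω t) volume a b :=
      fun k => hω.continuousOn_mul ((φ N k).continuous_aeval).continuousOn
    have hI : ∀ k, |∫ t in a..b, (φ N k).eval t * ω t| ≤ s * Kω := by
      intro k
      calc |∫ t in a..b, (φ N k).eval t * ω t|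
          ≤ ∫ t in a..b, |(φ N k).eval t * ω t| :=
            intervalIntegral.abs_integral_le_integral_abs hab'
        _ ≤ ∫ t in a..b, s * |ω t| := by
            apply intervalIntegral.integral_mono_on hab' (hint k).abs (hωabs.const_mul s)
            intro t ht
            rw [abs_mul]
            exact mul_le_mul_of_nonneg_right (hφbd k t ht) (abs_nonneg _)
        _ = s * Kω := by rw [intervalIntegral.integral_const_mul]
    have hwbd : ∀ n, |w N n| ≤ ((d:ℝ)+1) * (C / N * Kω) := by
      intro n
      rw [hw]
      calc |∑ k, (φ N k).eval (x N n) * ∫ t in a..b, (φ N k).eval t * ω t|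
          ≤ ∑ k, |(φ N k).eval (x N n) * ∫ t in a..b, (φ N k).eval t * ω t| :=
            Finset.abs_sum_le_sum_abs _ _
        _ ≤ ∑ _k : Fin (d+1), C / N * Kω := by
            apply Finset.sum_le_sum
            intro k _
            rw [abs_mul]
            have h1 := mul_le_mul (hφbd k _ (hx N n)) (hI k) (abs_nonneg _) hsnn
            calc |(φ N k).eval (x N n)| * |∫ t in a..b, (φ N k).eval t * ω t|
                ≤ s * (s * Kω) := h1
              _ = C/N * Kω := by rw [← mul_assoc, ← sq, hs2]
        _ = ((d:ℝ)+1) * (C/N * Kω) := by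
            rw [Finset.sum_const, Finset.card_fin]
            push_cast
            ring
    calc ∑ n, |w N n| ≤ ∑ _n : Fin N, ((d:ℝ)+1) * (C/N*Kω) :=
          Finset.sum_le_sum (fun n _ => hwbd n)
      _ = (N:ℝ) * (((d:ℝ)+1) * (C/N * Kω)) := by
          rw [Finset.sum_const, Finset.card_fin]
          push_cast
          ring
      _ = Kω * ((d:ℝ)+1) * C := by field_simp
  refine ⟨main, Kω*((d:ℝ)+1)*C + ∑ j ∈ Finset.range N₀, ∑ n, |w j n|, ?_⟩
  intro N hNd
  by_cases h : N₀ ≤ N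
  · have h0 : 0 ≤ ∑ j ∈ Finset.range N₀, ∑ n : Fin j, |w j n| := by positivity
    linarith [main N h]
  · push_neg at h
    have h1 : ∑ n, |w N n| ≤ ∑ j ∈ Finset.range N₀, ∑ n : Fin j, |w j n| :=
      Finset.single_le_sum (f := fun j => ∑ n : Fin j, |w j n|)
        (fun i _ => by positivity) (Finset.mem_range.mpr h)
    have h2 : (0:ℝ) ≤ Kω*((d:ℝ)+1)*C := by positivity
    linarith
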